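/- Let X be a real vector space of finite dimension with basis (e₀, e_q, e_{p₁}, e_{p₂}, e_{p₃}, e_{p₄}), equipped with the symmetric bilinear form making the basis orthogonal with e₀² = 1 and e_q² = e_{pⱼ}² = −1. Then the linear map σ* given by the 6×6 matrix [[3,2,1,1,1,1],[−2,−1,−1,−1,−1,−1],[−1,−1,−1,0,0,0],[−1,−1,0,−1,0,0],[−1,−1,0,0,−1,0],[−1,−1,0,0,0,−1]] is an involution (σ*² = Id) and preserves the bilinear form; moreover its fixed subspace is exactly {d e₀ − (d−2m) e_q − m(e_{p₁}+e_{p₂}+e_{p₃}+e_{p₄}) : d, m ∈ ℝ}, which is 2-dimensional. -/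
import Mathlib

open Matrix Module

/-- The matrix of the Jonquières involution on the Néron–Severi lattice. -/
def jonqMat : Matrix (Fin 6) (Fin 6) ℝ :=
  !![3, 2, 1, 1, 1, 1;
     -2, -1, -1, -1, -1, -1;
     -1, -1, -1, 0, 0, 0;
     -1, -1, 0, -1, 0, 0;
     -1, -1, 0, 0, -1, 0;
     -1, -1, 0, 0, 0, -1]

/-- The intersection form `diag(1, -1, -1, -1, -1, -1)`. -/
def minkMat : Matrix (Fin 6) (Fin 6) ℝ :=
  Matrix.diagonal (fun i => if i = 0 then 1 else -1)

def fixMat : Matrix (Fin 6) (Fin 2) ℝ :=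
  !![1, 0; -1, 2; 0, -1; 0, -1; 0, -1; 0, -1]


section vecaux
variable {α : Type*} (a b c d e f : α)
@[simp] lemma v6e0 : ![a,b,c,d,e,f] 0 = a := rfl
@[simp] lemma v6e1 : ![a,b,c,d,e,f] 1 = b := rfl
@[simp] lemma v6e2 : ![a,b,c,d,e,f] 2 = c := rfl
@[simp] lemma v6e3 : ![a,b,c,d,e,f] 3 = d := rfl
@[simp] lemma v6e4 : ![a,b,c,d,e,f] 4 = e := rfl
@[simp] lemma v6e5 : ![a,b,c,d,e,f] 5 = f := rfl
@[simp] lemma v6m0 (h) : ![a,b,c,d,e,f] ⟨0,h⟩ = a := rfl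
@[simp] lemma v6m1 (h) : ![a,b,c,d,e,f] ⟨1,h⟩ = b := rfl
@[simp] lemma v6m2 (h) : ![a,b,c,d,e,f] ⟨2,h⟩ = c := rfl
@[simp] lemma v6m3 (h) : ![a,b,c,d,e,f] ⟨3,h⟩ = d := rfl
@[simp] lemma v6m4 (h) : ![a,b,c,d,e,f] ⟨4,h⟩ = e := rfl
@[simp] lemma v6m5 (h) : ![a,b,c,d,e,f] ⟨5,h⟩ = f := rfl
@[simp] lemma v2e0 : ![a,b] 0 = a := rfl
@[simp] lemma v2e1 : ![a,b] 1 = b := rfl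
@[simp] lemma v2m0 (h) : ![a,b] ⟨0,h⟩ = a := rfl
@[simp] lemma v2m1 (h) : ![a,b] ⟨1,h⟩ = b := rfl
end vecaux

@[simp] lemma jq00 : jonqMat 0 0 = 3 := rfl
@[simp] lemma jqa00 (h) : jonqMat ⟨0,h⟩ 0 = 3 := rfl
@[simp] lemma jqb00 (h) : jonqMat 0 ⟨0,h⟩ = 3 := rfl
@[simp] lemma jqc00 (h h') : jonqMat ⟨0,h⟩ ⟨0,h'⟩ = 3 := rfl
@[simp] lemma jq01 : jonqMat 0 1 = 2 := rfl
@[simp] lemma jqa01 (h) : jonqMat ⟨0,h⟩ 1 = 2 := rfl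
@[simp] lemma jqb01 (h) : jonqMat 0 ⟨1,h⟩ = 2 := rfl
@[simp] lemma jqc01 (h h') : jonqMat ⟨0,h⟩ ⟨1,h'⟩ = 2 := rfl
@[simp] lemma jq02 : jonqMat 0 2 = 1 := rfl
@[simp] lemma jqa02 (h) : jonqMat ⟨0,h⟩ 2 = 1 := rfl
@[simp] lemma jqb02 (h) : jonqMat 0 ⟨2,h⟩ = 1 := rfl
@[simp] lemma jqc02 (h h') : jonqMat ⟨0,h⟩ ⟨2,h'⟩ = 1 := rfl
@[simp] lemma jq03 : jonqMat 0 3 = 1 := rfl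
@[simp] lemma jqa03 (h) : jonqMat ⟨0,h⟩ 3 = 1 := rfl
@[simp] lemma jqb03 (h) : jonqMat 0 ⟨3,h⟩ = 1 := rfl
@[simp] lemma jqc03 (h h') : jonqMat ⟨0,h⟩ ⟨3,h'⟩ = 1 := rfl
@[simp] lemma jq04 : jonqMat 0 4 = 1 := rfl
@[simp] lemma jqa04 (h) : jonqMat ⟨0,h⟩ 4 = 1 := rfl
@[simp] lemma jqb04 (h) : jonqMat 0 ⟨4,h⟩ = 1 := rfl
@[simp] lemma jqc04 (h h') : jonqMat ⟨0,h⟩ ⟨4,h'⟩ = 1 := rfl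
@[simp] lemma jq05 : jonqMat 0 5 = 1 := rfl
@[simp] lemma jqa05 (h) : jonqMat ⟨0,h⟩ 5 = 1 := rfl
@[simp] lemma jqb05 (h) : jonqMat 0 ⟨5,h⟩ = 1 := rfl
@[simp] lemma jqc05 (h h') : jonqMat ⟨0,h⟩ ⟨5,h'⟩ = 1 := rfl
@[simp] lemma jq10 : jonqMat 1 0 = -2 := rfl
@[simp] lemma jqa10 (h) : jonqMat ⟨1,h⟩ 0 = -2 := rfl
@[simp] lemma jqb10 (h) : jonqMat 1 ⟨0,h⟩ = -2 := rfl
@[simp] lemma jqc10 (h h') : jonqMat ⟨1,h⟩ ⟨0,h'⟩ = -2 := rfl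
@[simp] lemma jq11 : jonqMat 1 1 = -1 := rfl
@[simp] lemma jqa11 (h) : jonqMat ⟨1,h⟩ 1 = -1 := rfl
@[simp] lemma jqb11 (h) : jonqMat 1 ⟨1,h⟩ = -1 := rfl
@[simp] lemma jqc11 (h h') : jonqMat ⟨1,h⟩ ⟨1,h'⟩ = -1 := rfl
@[simp] lemma jq12 : jonqMat 1 2 = -1 := rfl
@[simp] lemma jqa12 (h) : jonqMat ⟨1,h⟩ 2 = -1 := rfl
@[simp] lemma jqb12 (h) : jonqMat 1 ⟨2,h⟩ = -1 := rfl
@[simp] lemma jqc12 (h h') : jonqMat ⟨1,h⟩ ⟨2,h'⟩ = -1 := rfl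
@[simp] lemma jq13 : jonqMat 1 3 = -1 := rfl
@[simp] lemma jqa13 (h) : jonqMat ⟨1,h⟩ 3 = -1 := rfl
@[simp] lemma jqb13 (h) : jonqMat 1 ⟨3,h⟩ = -1 := rfl
@[simp] lemma jqc13 (h h') : jonqMat ⟨1,h⟩ ⟨3,h'⟩ = -1 := rfl
@[simp] lemma jq14 : jonqMat 1 4 = -1 := rfl
@[simp] lemma jqa14 (h) : jonqMat ⟨1,h⟩ 4 = -1 := rfl
@[simp] lemma jqb14 (h) : jonqMat 1 ⟨4,h⟩ = -1 := rfl
@[simp] lemma jqc14 (h h') : jonqMat ⟨1,h⟩ ⟨4,h'⟩ = -1 := rfl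
@[simp] lemma jq15 : jonqMat 1 5 = -1 := rfl
@[simp] lemma jqa15 (h) : jonqMat ⟨1,h⟩ 5 = -1 := rfl
@[simp] lemma jqb15 (h) : jonqMat 1 ⟨5,h⟩ = -1 := rfl
@[simp] lemma jqc15 (h h') : jonqMat ⟨1,h⟩ ⟨5,h'⟩ = -1 := rfl
@[simp] lemma jq20 : jonqMat 2 0 = -1 := rfl
@[simp] lemma jqa20 (h) : jonqMat ⟨2,h⟩ 0 = -1 := rfl
@[simp] lemma jqb20 (h) : jonqMat 2 ⟨0,h⟩ = -1 := rfl
@[simp] lemma jqc20 (h h') : jonqMat ⟨2,h⟩ ⟨0,h'⟩ = -1 := rfl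
@[simp] lemma jq21 : jonqMat 2 1 = -1 := rfl
@[simp] lemma jqa21 (h) : jonqMat ⟨2,h⟩ 1 = -1 := rfl
@[simp] lemma jqb21 (h) : jonqMat 2 ⟨1,h⟩ = -1 := rfl
@[simp] lemma jqc21 (h h') : jonqMat ⟨2,h⟩ ⟨1,h'⟩ = -1 := rfl
@[simp] lemma jq22 : jonqMat 2 2 = -1 := rfl
@[simp] lemma jqa22 (h) : jonqMat ⟨2,h⟩ 2 = -1 := rfl
@[simp] lemma jqb22 (h) : jonqMat 2 ⟨2,h⟩ = -1 := rfl
@[simp] lemma jqc22 (h h') : jonqMat ⟨2,h⟩ ⟨2,h'⟩ = -1 := rfl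
@[simp] lemma jq23 : jonqMat 2 3 = 0 := rfl
@[simp] lemma jqa23 (h) : jonqMat ⟨2,h⟩ 3 = 0 := rfl
@[simp] lemma jqb23 (h) : jonqMat 2 ⟨3,h⟩ = 0 := rfl
@[simp] lemma jqc23 (h h') : jonqMat ⟨2,h⟩ ⟨3,h'⟩ = 0 := rfl
@[simp] lemma jq24 : jonqMat 2 4 = 0 := rfl
@[simp] lemma jqa24 (h) : jonqMat ⟨2,h⟩ 4 = 0 := rfl
@[simp] lemma jqb24 (h) : jonqMat 2 ⟨4,h⟩ = 0 := rfl
@[simp] lemma jqc24 (h h') : jonqMat ⟨2,h⟩ ⟨4,h'⟩ = 0 := rfl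
@[simp] lemma jq25 : jonqMat 2 5 = 0 := rfl
@[simp] lemma jqa25 (h) : jonqMat ⟨2,h⟩ 5 = 0 := rfl
@[simp] lemma jqb25 (h) : jonqMat 2 ⟨5,h⟩ = 0 := rfl
@[simp] lemma jqc25 (h h') : jonqMat ⟨2,h⟩ ⟨5,h'⟩ = 0 := rfl
@[simp] lemma jq30 : jonqMat 3 0 = -1 := rfl
@[simp] lemma jqa30 (h) : jonqMat ⟨3,h⟩ 0 = -1 := rfl
@[simp] lemma jqb30 (h) : jonqMat 3 ⟨0,h⟩ = -1 := rfl
@[simp] lemma jqc30 (h h') : jonqMat ⟨3,h⟩ ⟨0,h'⟩ = -1 := rfl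
@[simp] lemma jq31 : jonqMat 3 1 = -1 := rfl
@[simp] lemma jqa31 (h) : jonqMat ⟨3,h⟩ 1 = -1 := rfl
@[simp] lemma jqb31 (h) : jonqMat 3 ⟨1,h⟩ = -1 := rfl
@[simp] lemma jqc31 (h h') : jonqMat ⟨3,h⟩ ⟨1,h'⟩ = -1 := rfl
@[simp] lemma jq32 : jonqMat 3 2 = 0 := rfl
@[simp] lemma jqa32 (h) : jonqMat ⟨3,h⟩ 2 = 0 := rfl
@[simp] lemma jqb32 (h) : jonqMat 3 ⟨2,h⟩ = 0 := rfl
@[simp] lemma jqc32 (h h') : jonqMat ⟨3,h⟩ ⟨2,h'⟩ = 0 := rfl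
@[simp] lemma jq33 : jonqMat 3 3 = -1 := rfl
@[simp] lemma jqa33 (h) : jonqMat ⟨3,h⟩ 3 = -1 := rfl
@[simp] lemma jqb33 (h) : jonqMat 3 ⟨3,h⟩ = -1 := rfl
@[simp] lemma jqc33 (h h') : jonqMat ⟨3,h⟩ ⟨3,h'⟩ = -1 := rfl
@[simp] lemma jq34 : jonqMat 3 4 = 0 := rfl
@[simp] lemma jqa34 (h) : jonqMat ⟨3,h⟩ 4 = 0 := rfl
@[simp] lemma jqb34 (h) : jonqMat 3 ⟨4,h⟩ = 0 := rfl
@[simp] lemma jqc34 (h h') : jonqMat ⟨3,h⟩ ⟨4,h'⟩ = 0 := rfl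
@[simp] lemma jq35 : jonqMat 3 5 = 0 := rfl
@[simp] lemma jqa35 (h) : jonqMat ⟨3,h⟩ 5 = 0 := rfl
@[simp] lemma jqb35 (h) : jonqMat 3 ⟨5,h⟩ = 0 := rfl
@[simp] lemma jqc35 (h h') : jonqMat ⟨3,h⟩ ⟨5,h'⟩ = 0 := rfl
@[simp] lemma jq40 : jonqMat 4 0 = -1 := rfl
@[simp] lemma jqa40 (h) : jonqMat ⟨4,h⟩ 0 = -1 := rfl
@[simp] lemma jqb40 (h) : jonqMat 4 ⟨0,h⟩ = -1 := rfl
@[simp] lemma jqc40 (h h') : jonqMat ⟨4,h⟩ ⟨0,h'⟩ = -1 := rfl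
@[simp] lemma jq41 : jonqMat 4 1 = -1 := rfl
@[simp] lemma jqa41 (h) : jonqMat ⟨4,h⟩ 1 = -1 := rfl
@[simp] lemma jqb41 (h) : jonqMat 4 ⟨1,h⟩ = -1 := rfl
@[simp] lemma jqc41 (h h') : jonqMat ⟨4,h⟩ ⟨1,h'⟩ = -1 := rfl
@[simp] lemma jq42 : jonqMat 4 2 = 0 := rfl
@[simp] lemma jqa42 (h) : jonqMat ⟨4,h⟩ 2 = 0 := rfl
@[simp] lemma jqb42 (h) : jonqMat 4 ⟨2,h⟩ = 0 := rfl
@[simp] lemma jqc42 (h h') : jonqMat ⟨4,h⟩ ⟨2,h'⟩ = 0 := rfl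
@[simp] lemma jq43 : jonqMat 4 3 = 0 := rfl
@[simp] lemma jqa43 (h) : jonqMat ⟨4,h⟩ 3 = 0 := rfl
@[simp] lemma jqb43 (h) : jonqMat 4 ⟨3,h⟩ = 0 := rfl
@[simp] lemma jqc43 (h h') : jonqMat ⟨4,h⟩ ⟨3,h'⟩ = 0 := rfl
@[simp] lemma jq44 : jonqMat 4 4 = -1 := rfl
@[simp] lemma jqa44 (h) : jonqMat ⟨4,h⟩ 4 = -1 := rfl
@[simp] lemma jqb44 (h) : jonqMat 4 ⟨4,h⟩ = -1 := rfl
@[simp] lemma jqc44 (h h') : jonqMat ⟨4,h⟩ ⟨4,h'⟩ = -1 := rfl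
@[simp] lemma jq45 : jonqMat 4 5 = 0 := rfl
@[simp] lemma jqa45 (h) : jonqMat ⟨4,h⟩ 5 = 0 := rfl
@[simp] lemma jqb45 (h) : jonqMat 4 ⟨5,h⟩ = 0 := rfl
@[simp] lemma jqc45 (h h') : jonqMat ⟨4,h⟩ ⟨5,h'⟩ = 0 := rfl
@[simp] lemma jq50 : jonqMat 5 0 = -1 := rfl
@[simp] lemma jqa50 (h) : jonqMat ⟨5,h⟩ 0 = -1 := rfl
@[simp] lemma jqb50 (h) : jonqMat 5 ⟨0,h⟩ = -1 := rfl
@[simp] lemma jqc50 (h h') : jonqMat ⟨5,h⟩ ⟨0,h'⟩ = -1 := rfl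
@[simp] lemma jq51 : jonqMat 5 1 = -1 := rfl
@[simp] lemma jqa51 (h) : jonqMat ⟨5,h⟩ 1 = -1 := rfl
@[simp] lemma jqb51 (h) : jonqMat 5 ⟨1,h⟩ = -1 := rfl
@[simp] lemma jqc51 (h h') : jonqMat ⟨5,h⟩ ⟨1,h'⟩ = -1 := rfl
@[simp] lemma jq52 : jonqMat 5 2 = 0 := rfl
@[simp] lemma jqa52 (h) : jonqMat ⟨5,h⟩ 2 = 0 := rfl
@[simp] lemma jqb52 (h) : jonqMat 5 ⟨2,h⟩ = 0 := rfl
@[simp] lemma jqc52 (h h') : jonqMat ⟨5,h⟩ ⟨2,h'⟩ = 0 := rfl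
@[simp] lemma jq53 : jonqMat 5 3 = 0 := rfl
@[simp] lemma jqa53 (h) : jonqMat ⟨5,h⟩ 3 = 0 := rfl
@[simp] lemma jqb53 (h) : jonqMat 5 ⟨3,h⟩ = 0 := rfl
@[simp] lemma jqc53 (h h') : jonqMat ⟨5,h⟩ ⟨3,h'⟩ = 0 := rfl
@[simp] lemma jq54 : jonqMat 5 4 = 0 := rfl
@[simp] lemma jqa54 (h) : jonqMat ⟨5,h⟩ 4 = 0 := rfl
@[simp] lemma jqb54 (h) : jonqMat 5 ⟨4,h⟩ = 0 := rfl
@[simp] lemma jqc54 (h h') : jonqMat ⟨5,h⟩ ⟨4,h'⟩ = 0 := rfl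
@[simp] lemma jq55 : jonqMat 5 5 = -1 := rfl
@[simp] lemma jqa55 (h) : jonqMat ⟨5,h⟩ 5 = -1 := rfl
@[simp] lemma jqb55 (h) : jonqMat 5 ⟨5,h⟩ = -1 := rfl
@[simp] lemma jqc55 (h h') : jonqMat ⟨5,h⟩ ⟨5,h'⟩ = -1 := rfl
@[simp] lemma fx00 : fixMat 0 0 = 1 := rfl
@[simp] lemma fxa00 (h) : fixMat ⟨0,h⟩ 0 = 1 := rfl
@[simp] lemma fxb00 (h) : fixMat 0 ⟨0,h⟩ = 1 := rfl
@[simp] lemma fxc00 (h h') : fixMat ⟨0,h⟩ ⟨0,h'⟩ = 1 := rfl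
@[simp] lemma fx01 : fixMat 0 1 = 0 := rfl
@[simp] lemma fxa01 (h) : fixMat ⟨0,h⟩ 1 = 0 := rfl
@[simp] lemma fxb01 (h) : fixMat 0 ⟨1,h⟩ = 0 := rfl
@[simp] lemma fxc01 (h h') : fixMat ⟨0,h⟩ ⟨1,h'⟩ = 0 := rfl
@[simp] lemma fx10 : fixMat 1 0 = -1 := rfl
@[simp] lemma fxa10 (h) : fixMat ⟨1,h⟩ 0 = -1 := rfl
@[simp] lemma fxb10 (h) : fixMat 1 ⟨0,h⟩ = -1 := rfl
@[simp] lemma fxc10 (h h') : fixMat ⟨1,h⟩ ⟨0,h'⟩ = -1 := rfl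
@[simp] lemma fx11 : fixMat 1 1 = 2 := rfl
@[simp] lemma fxa11 (h) : fixMat ⟨1,h⟩ 1 = 2 := rfl
@[simp] lemma fxb11 (h) : fixMat 1 ⟨1,h⟩ = 2 := rfl
@[simp] lemma fxc11 (h h') : fixMat ⟨1,h⟩ ⟨1,h'⟩ = 2 := rfl
@[simp] lemma fx20 : fixMat 2 0 = 0 := rfl
@[simp] lemma fxa20 (h) : fixMat ⟨2,h⟩ 0 = 0 := rfl
@[simp] lemma fxb20 (h) : fixMat 2 ⟨0,h⟩ = 0 := rfl
@[simp] lemma fxc20 (h h') : fixMat ⟨2,h⟩ ⟨0,h'⟩ = 0 := rfl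
@[simp] lemma fx21 : fixMat 2 1 = -1 := rfl
@[simp] lemma fxa21 (h) : fixMat ⟨2,h⟩ 1 = -1 := rfl
@[simp] lemma fxb21 (h) : fixMat 2 ⟨1,h⟩ = -1 := rfl
@[simp] lemma fxc21 (h h') : fixMat ⟨2,h⟩ ⟨1,h'⟩ = -1 := rfl
@[simp] lemma fx30 : fixMat 3 0 = 0 := rfl
@[simp] lemma fxa30 (h) : fixMat ⟨3,h⟩ 0 = 0 := rfl
@[simp] lemma fxb30 (h) : fixMat 3 ⟨0,h⟩ = 0 := rfl
@[simp] lemma fxc30 (h h') : fixMat ⟨3,h⟩ ⟨0,h'⟩ = 0 := rfl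
@[simp] lemma fx31 : fixMat 3 1 = -1 := rfl
@[simp] lemma fxa31 (h) : fixMat ⟨3,h⟩ 1 = -1 := rfl
@[simp] lemma fxb31 (h) : fixMat 3 ⟨1,h⟩ = -1 := rfl
@[simp] lemma fxc31 (h h') : fixMat ⟨3,h⟩ ⟨1,h'⟩ = -1 := rfl
@[simp] lemma fx40 : fixMat 4 0 = 0 := rfl
@[simp] lemma fxa40 (h) : fixMat ⟨4,h⟩ 0 = 0 := rfl
@[simp] lemma fxb40 (h) : fixMat 4 ⟨0,h⟩ = 0 := rfl
@[simp] lemma fxc40 (h h') : fixMat ⟨4,h⟩ ⟨0,h'⟩ = 0 := rfl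
@[simp] lemma fx41 : fixMat 4 1 = -1 := rfl
@[simp] lemma fxa41 (h) : fixMat ⟨4,h⟩ 1 = -1 := rfl
@[simp] lemma fxb41 (h) : fixMat 4 ⟨1,h⟩ = -1 := rfl
@[simp] lemma fxc41 (h h') : fixMat ⟨4,h⟩ ⟨1,h'⟩ = -1 := rfl
@[simp] lemma fx50 : fixMat 5 0 = 0 := rfl
@[simp] lemma fxa50 (h) : fixMat ⟨5,h⟩ 0 = 0 := rfl
@[simp] lemma fxb50 (h) : fixMat 5 ⟨0,h⟩ = 0 := rfl
@[simp] lemma fxc50 (h h') : fixMat ⟨5,h⟩ ⟨0,h'⟩ = 0 := rfl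
@[simp] lemma fx51 : fixMat 5 1 = -1 := rfl
@[simp] lemma fxa51 (h) : fixMat ⟨5,h⟩ 1 = -1 := rfl
@[simp] lemma fxb51 (h) : fixMat 5 ⟨1,h⟩ = -1 := rfl
@[simp] lemma fxc51 (h h') : fixMat ⟨5,h⟩ ⟨1,h'⟩ = -1 := rfl

lemma fix_iff (x : Fin 6 → ℝ) : jonqMat.mulVec x = x ↔
    ∃ d m : ℝ, x = ![d, -(d - 2 * m), -m, -m, -m, -m] := by
  constructor
  · intro h
    have h0 := congrFun h 0
    have h1 := congrFun h 1
    have h2 := congrFun h 2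
    have h3 := congrFun h 3
    have h4 := congrFun h 4
    have h5 := congrFun h 5
    simp [mulVec, dotProduct, Fin.sum_univ_six] at h0 h1 h2 h3 h4 h5
    refine ⟨x 0, -(x 2), ?_⟩
    funext i
    fin_cases i <;>
      simp <;> linarith
  · rintro ⟨d, m, rfl⟩
    funext i
    have e0 : (![d, -(d - 2 * m), -m, -m, -m, -m] : Fin 6 → ℝ) 0 = d := rfl
    have e1 : (![d, -(d - 2 * m), -m, -m, -m, -m] : Fin 6 → ℝ) 1 = -(d - 2*m) := rfl
    have e2 : (![d, -(d - 2 * m), -m, -m, -m, -m] : Fin 6 → ℝ) 2 = -m := rfl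
    have e3 : (![d, -(d - 2 * m), -m, -m, -m, -m] : Fin 6 → ℝ) 3 = -m := rfl
    have e4 : (![d, -(d - 2 * m), -m, -m, -m, -m] : Fin 6 → ℝ) 4 = -m := rfl
    have e5 : (![d, -(d - 2 * m), -m, -m, -m, -m] : Fin 6 → ℝ) 5 = -m := rfl
    fin_cases i <;>
      simp [mulVec, dotProduct, Fin.sum_univ_six] <;> ring

theorem jonquieres_matrix_involution :
    jonqMat * jonqMat = 1 ∧
    jonqMatᵀ * minkMat * jonqMat = minkMat ∧
    (∀ x : Fin 6 → ℝ, jonqMat.mulVec x = x ↔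
      ∃ d m : ℝ, x = ![d, -(d - 2 * m), -m, -m, -m, -m]) ∧
    finrank ℝ ↥(Module.End.eigenspace (Matrix.toLin' jonqMat) 1) = 2 := by
  refine ⟨?_, ?_, fix_iff, ?_⟩
  · ext i j
    fin_cases i <;> fin_cases j <;>
      simp [Matrix.mul_apply, Fin.sum_univ_six, Matrix.one_apply] <;> norm_num
  · ext i j
    fin_cases i <;> fin_cases j <;>
      simp [Matrix.mul_apply, Matrix.transpose_apply, minkMat, Matrix.diagonal,
        Fin.sum_univ_six] <;> norm_num
  · have hE : Module.End.eigenspace (Matrix.toLin' jonqMat) 1 =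
        LinearMap.range (Matrix.toLin' fixMat) := by
      ext x
      rw [Module.End.mem_eigenspace_iff]
      simp only [one_smul, Matrix.toLin'_apply]
      rw [fix_iff]
      constructor
      · rintro ⟨d, m, rfl⟩
        refine ⟨![d, m], ?_⟩
        funext i
        have y0 : (![d, m] : Fin 2 → ℝ) 0 = d := rfl
        have y1 : (![d, m] : Fin 2 → ℝ) 1 = m := rfl
        fin_cases i <;>
          simp [mulVec, dotProduct, Fin.sum_univ_two] <;> ring
      · rintro ⟨y, rfl⟩
        refine ⟨y 0, y 1, ?_⟩
        funext i
        fin_cases i <;>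
          simp [mulVec, dotProduct, Fin.sum_univ_two] <;> ring
    rw [hE]
    have hinj : Function.Injective (Matrix.toLin' fixMat) := by
      intro y z h
      have h0 := congrFun h 0
      have h2 := congrFun h 2
      simp [Matrix.toLin'_apply, mulVec, dotProduct, Fin.sum_univ_two] at h0 h2
      funext i
      fin_cases i <;> simp <;> linarith
    rw [LinearMap.finrank_range_of_inj hinj]
    simp
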